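/- Let W and Y be real symmetric n×n matrices with W positive definite. Then the block matrix S = [[W^{1/2}, 0],[W^{−1/2} Y, W^{−1/2}]] is symplectic, and the matrix G = [[W + Y W⁻¹ Y, Y W⁻¹],[W⁻¹ Y, W⁻¹]] satisfies G = SᵀS; consequently G is a symmetric, positive definite, symplectic 2n×2n matrix. -/

import Mathlib

open Matrix

/-- The positive semidefinite square root of a positive semidefinite matrix
(the definition `Matrix.PosSemidef.sqrt` of the older Mathlib, removed since). -/
noncomputable def Matrix.PosSemidef.sqrt {n 𝕜 : Type*} [Fintype n] [DecidableEq n] [RCLike 𝕜]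
    [PartialOrder 𝕜] {A : Matrix n n 𝕜} (hA : A.PosSemidef) : Matrix n n 𝕜 :=
  (hA.1.eigenvectorUnitary : Matrix n n 𝕜) *
    diagonal (fun i => ((√(hA.1.eigenvalues i) : ℝ) : 𝕜)) *
    (star hA.1.eigenvectorUnitary : Matrix n n 𝕜)

/-- The standard symplectic matrix `J = [[0, Iₙ],[−Iₙ, 0]]`. -/
def Jmat (n : ℕ) : Matrix (Fin n ⊕ Fin n) (Fin n ⊕ Fin n) ℝ :=
  Matrix.fromBlocks 0 1 (-1) 0

/-- The block matrix `S = [[W^{1/2}, 0],[W^{−1/2} Y, W^{−1/2}]]` associated with real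
symmetric matrices `W` (positive definite) and `Y`, where `W^{1/2}` is the positive
definite square root of `W`. -/
noncomputable def SWY {n : ℕ} (W Y : Matrix (Fin n) (Fin n) ℝ) (hW : W.PosDef) :
    Matrix (Fin n ⊕ Fin n) (Fin n ⊕ Fin n) ℝ :=
  Matrix.fromBlocks hW.posSemidef.sqrt 0 ((hW.posSemidef.sqrt)⁻¹ * Y) (hW.posSemidef.sqrt)⁻¹

lemma Matrix.PosSemidef.sqrt_mul_self {n : ℕ} {A : Matrix (Fin n) (Fin n) ℝ}
    (hA : A.PosSemidef) : hA.sqrt * hA.sqrt = A := by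
  have hU : (star hA.1.eigenvectorUnitary : Matrix (Fin n) (Fin n) ℝ) *
      (hA.1.eigenvectorUnitary : Matrix (Fin n) (Fin n) ℝ) = 1 :=
    Unitary.coe_star_mul_self _
  conv_rhs => rw [hA.1.spectral_theorem]
  rw [Unitary.conjStarAlgAut_apply, Matrix.PosSemidef.sqrt]
  simp only [Matrix.mul_assoc]
  rw [← Matrix.mul_assoc (star hA.1.eigenvectorUnitary : Matrix (Fin n) (Fin n) ℝ), hU,
    Matrix.one_mul, ← Matrix.mul_assoc (diagonal _), diagonal_mul_diagonal]
  congr 3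
  funext i
  simp [Real.mul_self_sqrt (hA.eigenvalues_nonneg i)]

lemma Matrix.PosSemidef.posSemidef_sqrt {n : ℕ} {A : Matrix (Fin n) (Fin n) ℝ}
    (hA : A.PosSemidef) : hA.sqrt.PosSemidef := by
  rw [Matrix.PosSemidef.sqrt,
    (Unitary.isUnit_coe (U := hA.1.eigenvectorUnitary)).posSemidef_star_right_conjugate_iff]
  exact Matrix.PosSemidef.diagonal (fun i => by simp [Real.sqrt_nonneg])

lemma Jmat_eq_neg_J (n : ℕ) : Jmat n = -(Matrix.J (Fin n) ℝ) := by
  simp [Jmat, Matrix.J, Matrix.fromBlocks_neg]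

lemma mem_symp_iff {n : ℕ} (A : Matrix (Fin n ⊕ Fin n) (Fin n ⊕ Fin n) ℝ) :
    A ∈ Matrix.symplecticGroup (Fin n) ℝ ↔ Aᵀ * Jmat n * A = Jmat n := by
  rw [SymplecticGroup.mem_iff', Jmat_eq_neg_J]
  constructor
  · intro h; rw [Matrix.mul_neg, Matrix.neg_mul, h]
  · intro h; have := congrArg Neg.neg h
    simpa [Matrix.mul_neg, Matrix.neg_mul] using this

lemma posDef_transpose_mul_self {m : Type*} [Fintype m] [DecidableEq m] (A : Matrix m m ℝ)
    (hA : IsUnit A.det) : (Aᵀ * A).PosDef := by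
  have hinj := Matrix.mulVec_injective_iff_isUnit.mpr ((Matrix.isUnit_iff_isUnit_det A).mpr hA)
  simpa using Matrix.PosDef.conjTranspose_mul_self A hinj

/-- `S = [[W^{1/2}, 0],[W^{−1/2}Y, W^{−1/2}]]` is symplectic and
`G = [[W + Y W⁻¹ Y, Y W⁻¹],[W⁻¹ Y, W⁻¹]]` satisfies `G = SᵀS`; consequently `G` is
symmetric, positive definite and symplectic. -/
theorem statement14 (n : ℕ) (W Y : Matrix (Fin n) (Fin n) ℝ)
    (hW : W.PosDef) (hY : Y.IsSymm) :
    (SWY W Y hW)ᵀ * Jmat n * SWY W Y hW = Jmat n ∧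
    Matrix.fromBlocks (W + Y * W⁻¹ * Y) (Y * W⁻¹) (W⁻¹ * Y) W⁻¹ = (SWY W Y hW)ᵀ * SWY W Y hW ∧
    (Matrix.fromBlocks (W + Y * W⁻¹ * Y) (Y * W⁻¹) (W⁻¹ * Y) W⁻¹).IsSymm ∧
    (Matrix.fromBlocks (W + Y * W⁻¹ * Y) (Y * W⁻¹) (W⁻¹ * Y) W⁻¹).PosDef ∧
    (Matrix.fromBlocks (W + Y * W⁻¹ * Y) (Y * W⁻¹) (W⁻¹ * Y) W⁻¹)ᵀ * Jmat n *
        Matrix.fromBlocks (W + Y * W⁻¹ * Y) (Y * W⁻¹) (W⁻¹ * Y) W⁻¹ = Jmat n := by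

  set R := hW.posSemidef.sqrt with hRdef
  have hRR : R * R = W := hW.posSemidef.sqrt_mul_self
  have hRsym : Rᵀ = R := by
    have := hW.posSemidef.posSemidef_sqrt.1
    simpa [Matrix.IsHermitian] using this
  have hdetW : IsUnit W.det := hW.det_pos.ne'.isUnit
  have hdetR : IsUnit R.det := by
    have : R.det * R.det = W.det := by rw [← Matrix.det_mul, hRR]
    exact isUnit_of_mul_isUnit_left (this ▸ hdetW)
  have hR1 : R⁻¹ * R = 1 := Matrix.nonsing_inv_mul R hdetR
  have hR2 : R * R⁻¹ = 1 := Matrix.mul_nonsing_inv R hdetR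
  have hRinvSym : (R⁻¹)ᵀ = R⁻¹ := by
    rw [Matrix.transpose_nonsing_inv, hRsym]
  have hWinv : W⁻¹ = R⁻¹ * R⁻¹ := by rw [← hRR, Matrix.mul_inv_rev]
  have hYsym : Yᵀ = Y := hY
  -- transpose of S
  have hST : (SWY W Y hW)ᵀ = Matrix.fromBlocks R (Y * R⁻¹) 0 R⁻¹ := by
    rw [SWY, Matrix.fromBlocks_transpose, Matrix.transpose_mul, hRsym, hRinvSym, hYsym,
      Matrix.transpose_zero]
  have hS : (SWY W Y hW)ᵀ * Jmat n * SWY W Y hW = Jmat n := by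
    rw [hST, SWY, ← hRdef, Jmat, Matrix.fromBlocks_multiply, Matrix.fromBlocks_multiply]
    congr 1 <;> simp [Matrix.mul_assoc, hR1, hR2] <;>
      simp [← Matrix.mul_assoc, hR1, hR2]
  have hG : Matrix.fromBlocks (W + Y * W⁻¹ * Y) (Y * W⁻¹) (W⁻¹ * Y) W⁻¹ =
      (SWY W Y hW)ᵀ * SWY W Y hW := by
    rw [hST, SWY, ← hRdef, Matrix.fromBlocks_multiply, hWinv]
    congr 1 <;> simp [hRR, Matrix.mul_assoc]
  have hSmem : SWY W Y hW ∈ Matrix.symplecticGroup (Fin n) ℝ := (mem_symp_iff _).mpr hS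
  have hGmem : Matrix.fromBlocks (W + Y * W⁻¹ * Y) (Y * W⁻¹) (W⁻¹ * Y) W⁻¹ ∈
      Matrix.symplecticGroup (Fin n) ℝ := by
    rw [hG]
    exact mul_mem (SymplecticGroup.transpose_mem hSmem) hSmem
  have hdetS : IsUnit (SWY W Y hW).det := SymplecticGroup.symplectic_det hSmem
  refine ⟨hS, hG, ?_, ?_, (mem_symp_iff _).mp hGmem⟩
  · rw [Matrix.IsSymm, hG, Matrix.transpose_mul, Matrix.transpose_transpose]
  · rw [hG]
    exact posDef_transpose_mul_self _ hdetS
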